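/- Every ideal-simple left CP-semiring is congruence-simple (and hence simple, i.e., simultaneously congruence-simple and ideal-simple). -/

import Mathlib

universe u

/-- A left CP-semiring: every cyclic left `S`-semimodule is projective. -/
def IsLeftCPSemiring (S : Type u) [Semiring S] : Prop :=
  ∀ (M : Type u) [AddCommMonoid M] [Module S M],
    (∃ m : M, Submodule.span S {m} = ⊤) → Module.Projective S M

/-- A semiring is congruence-simple if it is nontrivial and its only semiring
congruences are the diagonal one and the universal one. -/
def IsCongruenceSimple (S : Type u) [Semiring S] : Prop :=
  Nontrivial S ∧ ∀ c : RingCon S, c = ⊥ ∨ c = ⊤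

/-- A semiring is ideal-simple if it is nontrivial and its only two-sided ideals
(additive submonoids closed under left and right multiplication) are `0` and `S`. -/
def IsIdealSimple (S : Type u) [Semiring S] : Prop :=
  Nontrivial S ∧ ∀ I : AddSubmonoid S,
    (∀ a ∈ I, ∀ s : S, s * a ∈ I ∧ a * s ∈ I) → I = ⊥ ∨ I = ⊤

/-- every ideal-simple left CP-semiring is congruence-simple, and
hence simple (both congruence-simple and ideal-simple). -/
theorem congruenceSimple_of_idealSimple_leftCPSemiring
    (S : Type u) [Semiring S]
    (hCP : IsLeftCPSemiring S) (hI : IsIdealSimple S) :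
    IsCongruenceSimple S ∧ IsIdealSimple S := by
  refine ⟨⟨hI.1, fun c => ?_⟩, hI⟩
  by_cases htop : c = ⊤
  · exact Or.inr htop
  left
  -- the quotient as an S-module
  letI : Module S c.Quotient := Module.compHom _ c.mk'
  have hsmul : ∀ (s : S) (x : c.Quotient), s • x = c.mk' s * x := fun _ _ => rfl
  -- the quotient is nontrivial
  have hne : (0 : c.Quotient) ≠ 1 := by
    intro h
    apply htop
    have h01 : c 0 1 := c.eq.mp h
    refine RingCon.ext fun x y => ?_
    simp only [RingCon.coe_top, Pi.top_apply, Prop.top_eq_true, iff_true]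
    have hx : c x 0 := by simpa using c.mul (c.symm h01) (c.refl x)
    have hy : c y 0 := by simpa using c.mul (c.symm h01) (c.refl y)
    exact c.trans hx (c.symm hy)
  -- the quotient is cyclic, generated by 1
  have hcyc : ∃ m : c.Quotient, Submodule.span S {m} = ⊤ := by
    refine ⟨1, ?_⟩
    rw [Submodule.eq_top_iff']
    intro x
    induction x using Quotient.inductionOn' with
    | h s =>
      refine Submodule.mem_span_singleton.mpr ?_
      exact ⟨s, mul_one (c.mk' s)⟩
  haveI := hCP c.Quotient hcyc
  -- π : S →ₗ[S] c.Quotient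
  let π : S →ₗ[S] c.Quotient :=
    { toFun := c.mk'
      map_add' := fun _ _ => map_add _ _ _
      map_smul' := fun s x => by
        show c.mk' (s * x) = c.mk' s * c.mk' x
        exact map_mul _ _ _ }
  have hπsurj : Function.Surjective π := fun x =>
    Quotient.inductionOn' x fun s => ⟨s, rfl⟩
  obtain ⟨ν, hν⟩ := Module.projective_lifting_property π LinearMap.id hπsurj
  set e : S := ν 1 with he
  have hνx : ∀ x : c.Quotient, ν x = 0 ∨ True := fun _ => Or.inr trivial
  have hπe : π e = 1 := by
    have := LinearMap.congr_fun hν (1 : c.Quotient)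
    simpa using this
  -- key: c a b → a * s * e = b * s * e
  have key : ∀ a b : S, c a b → ∀ s : S, a * s * e = b * s * e := by
    intro a b hab s
    have h1 : c (a * s) (b * s) := c.mul hab (c.refl s)
    have h2 : π (a * s) = π (b * s) := c.eq.mpr h1
    have h3 : ν (π (a * s)) = ν (π (b * s)) := congrArg ν h2
    have h4 : ∀ t : S, ν (π t) = t * e := by
      intro t
      have : π t = t • (1 : c.Quotient) := by
        rw [hsmul]; simp [RingCon.mk']; rfl
      rw [this, map_smul, ← he, smul_eq_mul]
    rw [h4, h4] at h3
    exact h3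
  -- the two-sided ideal generated by e
  set I : AddSubmonoid S := AddSubmonoid.closure {x | ∃ s t : S, x = s * e * t} with hIdef
  have hIideal : ∀ a ∈ I, ∀ s : S, s * a ∈ I ∧ a * s ∈ I := by
    intro a ha s
    constructor
    · induction ha using AddSubmonoid.closure_induction with
      | mem x hx =>
        obtain ⟨u, v, rfl⟩ := hx
        exact AddSubmonoid.subset_closure ⟨s * u, v, by simp [mul_assoc]⟩
      | zero => simpa using I.zero_mem
      | add x y _ _ hx hy => rw [mul_add]; exact I.add_mem hx hy
    · induction ha using AddSubmonoid.closure_induction with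
      | mem x hx =>
        obtain ⟨u, v, rfl⟩ := hx
        exact AddSubmonoid.subset_closure ⟨u, v * s, by simp [mul_assoc]⟩
      | zero => simpa using I.zero_mem
      | add x y _ _ hx hy => rw [add_mul]; exact I.add_mem hx hy
  have heI : e ∈ I := AddSubmonoid.subset_closure ⟨1, 1, by simp⟩
  have hIne : I ≠ ⊥ := by
    intro h
    have : e = 0 := by
      have := h ▸ heI
      simpa [AddSubmonoid.mem_bot] using this
    rw [this] at hπe
    rw [map_zero] at hπe
    exact hne hπe
  have hItop : I = ⊤ := (hI.2 I hIideal).resolve_left hIne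
  have h1I : (1 : S) ∈ I := hItop ▸ AddSubmonoid.mem_top 1
  -- conclude c = ⊥
  refine RingCon.ext fun a b => ?_
  rw [show ((⊥ : RingCon S) a b) ↔ a = b from Iff.rfl]
  constructor
  · intro hab
    -- show a = b using 1 ∈ I
    have hP : ∀ x ∈ I, a * x = b * x := by
      intro x hx
      induction hx using AddSubmonoid.closure_induction with
      | mem y hy =>
        obtain ⟨u, v, rfl⟩ := hy
        calc a * (u * e * v) = (a * u * e) * v := by simp [mul_assoc]
        _ = (b * u * e) * v := by rw [key a b hab u]
        _ = b * (u * e * v) := by simp [mul_assoc]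
      | zero => simp
      | add x y _ _ hx hy => rw [mul_add, mul_add, hx, hy]
    have := hP 1 h1I
    simpa using this
  · intro h
    rw [h]
    exact c.refl b
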